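/- Let (E, F) be an accessible set system satisfying the chain property, and F : F⁺ → ℝ a quasi-concave set function. Then G_F = F on F⁺, where G_F(X) = min over x ∈ ex(X) of π_F(x, X) and π_F(x, X) = max{F(A) : A ∈ F⁺, x ∈ A ⊆ X}. -/

import Mathlib

open scoped Classical

variable {E : Type*}

/-- A set system is accessible if every nonempty feasible set has a removable element. -/
def Accessible [DecidableEq E] (F : Set (Finset E)) : Prop :=
  ∀ X ∈ F, X ≠ ∅ → ∃ x ∈ X, X.erase x ∈ F

/-- A set system is up-accessible if every feasible set other than the ground set can be grown. -/
def UpAccessible [Fintype E] [DecidableEq E] (F : Set (Finset E)) : Prop :=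
  ∀ X ∈ F, X ≠ Finset.univ → ∃ x ∈ Finset.univ \ X, insert x X ∈ F

/-- The complement set system. -/
def ComplSys [Fintype E] [DecidableEq E] (F : Set (Finset E)) : Set (Finset E) :=
  {X | Xᶜ ∈ F}

/-- The chain property. -/
def ChainProp [DecidableEq E] (F : Set (Finset E)) : Prop :=
  ∀ X ∈ F, ∀ Y ∈ F, X ⊂ Y → ∃ y ∈ Y \ X, Y.erase y ∈ F

/-- The set of extreme points of `X`. -/
noncomputable def exF [DecidableEq E] (F : Set (Finset E)) (X : Finset E) : Finset E :=
  @Finset.filter _ (fun x => X.erase x ∈ F) (Classical.decPred _) X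

/-- The heritage property of the extreme point operator. -/
def Heritage [DecidableEq E] (F : Set (Finset E)) : Prop :=
  ∀ X ∈ F, ∀ Y ∈ F, X ⊆ Y → exF F Y ∩ X ⊆ exF F X

/-- `Z` is a cover of `S`: a minimal feasible set containing `S`. -/
def IsCover (F : Set (Finset E)) (S Z : Finset E) : Prop :=
  Z ∈ F ∧ S ⊆ Z ∧ ∀ W ∈ F, S ⊆ W → W ⊆ Z → W = Z

/-- A convex geometry. -/
def ConvexGeometry [Fintype E] [DecidableEq E] (F : Set (Finset E)) : Prop :=
  ∅ ∈ F ∧ Finset.univ ∈ F ∧ (∀ X ∈ F, ∀ Y ∈ F, X ∩ Y ∈ F) ∧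
    (∀ X ∈ F, X ≠ Finset.univ → ∃ x ∈ Finset.univ \ X, insert x X ∈ F)

/-- Quasi-concavity with respect to covers. -/
def QuasiConcave [DecidableEq E] (F : Set (Finset E)) (f : Finset E → ℝ) : Prop :=
  ∀ X ∈ F, ∀ Y ∈ F, ∀ Z, IsCover F (X ∪ Y) Z → min (f X) (f Y) ≤ f Z

/-- Monotone linkage function. -/
def MonotoneLinkage (π : E → Finset E → ℝ) : Prop :=
  ∀ x : E, ∀ X Y : Finset E, X ⊆ Y → π x X ≤ π x Y

/-- The nonempty members of `F`. -/
def Fplus (F : Set (Finset E)) : Set (Finset E) := {X ∈ F | X ≠ ∅}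

/-- The linkage function associated with a set function `f` on the family `F`. -/
noncomputable def piF (F : Set (Finset E)) (f : Finset E → ℝ) (x : E) (X : Finset E) : ℝ :=
  if x ∈ X ∧ {A | A ∈ F ∧ x ∈ A ∧ A ⊆ X}.Nonempty
  then sSup (f '' {A | A ∈ F ∧ x ∈ A ∧ A ⊆ X})
  else sInf (f '' F)

/-- `G_F(X)`: the minimum of `π_F(x, X)` over extreme points `x` of `X`,
where `π_F` is built from the nonempty members of `F`. -/
noncomputable def GF [DecidableEq E] (F : Set (Finset E)) (f : Finset E → ℝ)
    (X : Finset E) : ℝ :=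
  sInf ((fun x => piF (Fplus F) f x X) '' ↑(exF F X))

/-- `F_π(X)`: the minimum of `π(x, X)` over extreme points `x` of `X`. -/
noncomputable def Fpi [DecidableEq E] (F : Set (Finset E)) (π : E → Finset E → ℝ)
    (X : Finset E) : ℝ :=
  sInf ((fun x => π x X) '' ↑(exF F X))

/-- Inside a feasible set `X` containing `S`, there is a cover of `S` contained in `X`. -/
lemma exists_cover_subset [DecidableEq E] (F : Set (Finset E)) {X S : Finset E}
    (hX : X ∈ F) (hS : S ⊆ X) : ∃ Z, IsCover F S Z ∧ Z ⊆ X := by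
  classical
  set T : Finset (Finset E) := X.powerset.filter (fun W => W ∈ F ∧ S ⊆ W) with hT
  have hXT : X ∈ T := by simp [hT, hX, hS]
  obtain ⟨Z, hZT, hZmin⟩ : ∃ Z ∈ T, ∀ W ∈ T, ¬ W < Z := by
    obtain ⟨Z, hZ⟩ := Finset.exists_minimal (s := T) ⟨X, hXT⟩
    exact ⟨Z, hZ.1, fun W hW hlt => lt_irrefl _ (lt_of_lt_of_le hlt (hZ.2 hW hlt.le))⟩
  simp only [hT, Finset.mem_filter, Finset.mem_powerset] at hZT
  refine ⟨Z, ⟨hZT.2.1, hZT.2.2, ?_⟩, hZT.1⟩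
  intro W hW hSW hWZ
  by_contra hne
  exact hZmin W (by simp [hT, hW, hSW, hWZ.trans hZT.1])
    (lt_of_le_of_ne hWZ hne)

/-- Key lemma: there is an extreme point `x₀` of `X` such that every nonempty feasible
subset of `X` containing `x₀` has value at most `f X`. -/
lemma exists_good_extreme [DecidableEq E] (F : Set (Finset E)) (hacc : Accessible F)
    (hchain : ChainProp F) (f : Finset E → ℝ) (hqc : QuasiConcave F f)
    {X : Finset E} (hX : X ∈ F) (hXne : X ≠ ∅) :
    ∃ x₀ ∈ exF F X, ∀ A ∈ F, A ≠ ∅ → x₀ ∈ A → A ⊆ X → f A ≤ f X := by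
  classical
  set B : Finset (Finset E) := X.powerset.filter (fun A => A ∈ F ∧ A ≠ ∅ ∧ f X < f A)
    with hB
  by_cases hBne : B.Nonempty
  · obtain ⟨A, hAB, hAmax⟩ : ∃ A ∈ B, ∀ W ∈ B, ¬ A < W := by
      obtain ⟨A, hA⟩ := Finset.exists_maximal (s := B) hBne
      exact ⟨A, hA.1, fun W hW hlt => lt_irrefl _ (lt_of_lt_of_le hlt (hA.2 hW hlt.le))⟩
    simp only [hB, Finset.mem_filter, Finset.mem_powerset] at hAB
    obtain ⟨hAX, hAF, hAne, hAf⟩ := hAB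
    have hAXss : A ⊂ X := lt_of_le_of_ne hAX (by rintro rfl; exact lt_irrefl _ hAf)
    obtain ⟨y, hy, hyF⟩ := hchain A hAF X hX hAXss
    rw [Finset.mem_sdiff] at hy
    refine ⟨y, by simp [exF, hy.1, hyF], ?_⟩
    intro D hD hDne hyD hDX
    by_contra hfD
    push_neg at hfD
    obtain ⟨Z, hZcov, hZX⟩ := exists_cover_subset F hX (Finset.union_subset hAX hDX)
    have hmin : min (f A) (f D) ≤ f Z := hqc A hAF D hD Z hZcov
    have hXZ : f X < f Z := lt_of_lt_of_le (lt_min hAf hfD) hmin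
    have hyZ : y ∈ Z := hZcov.2.1 (Finset.mem_union_right _ hyD)
    have hAZ : A < Z := lt_of_le_of_ne
      (le_trans Finset.subset_union_left hZcov.2.1)
      (by rintro rfl; exact hy.2 hyZ)
    exact hAmax Z (by simp [hB, hZX, hZcov.1, Finset.ne_empty_of_mem hyZ, hXZ]) hAZ
  · obtain ⟨x, hx, hxF⟩ := hacc X hX hXne
    refine ⟨x, by simp [exF, hx, hxF], ?_⟩
    intro A hA hAne hxA hAX
    by_contra hfA
    push_neg at hfA
    exact hBne ⟨A, by simp [hB, hAX, hA, hAne, hfA]⟩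

theorem stmt10 [DecidableEq E] (F : Set (Finset E)) (hacc : Accessible F)
    (hchain : ChainProp F) (f : Finset E → ℝ) (hqc : QuasiConcave F f) :
    ∀ X ∈ F, X ≠ ∅ → GF F f X = f X := by
  classical
  intro X hX hXne
  -- basic facts about the sets appearing in `piF`
  have hXF : X ∈ Fplus F := ⟨hX, hXne⟩
  have hSfin : ∀ x : E, ({A | A ∈ Fplus F ∧ x ∈ A ∧ A ⊆ X} : Set (Finset E)).Finite := by
    intro x
    exact Set.Finite.subset (X.powerset : Finset (Finset E)).finite_toSet
      (fun A hA => by simpa [Finset.mem_powerset] using hA.2.2)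
  have hpi_eq : ∀ x ∈ X, piF (Fplus F) f x X =
      sSup (f '' {A | A ∈ Fplus F ∧ x ∈ A ∧ A ⊆ X}) := by
    intro x hx
    rw [piF, if_pos ⟨hx, ⟨X, hXF, hx, le_refl _⟩⟩]
  -- (a) every value `piF x X` for `x ∈ exF F X` is at least `f X`
  have hge : ∀ x ∈ exF F X, f X ≤ piF (Fplus F) f x X := by
    intro x hx
    have hxX : x ∈ X := Finset.mem_of_mem_filter _ hx
    rw [hpi_eq x hxX]
    exact le_csSup ((hSfin x).image f).bddAbove ⟨X, ⟨hXF, hxX, le_refl _⟩, rfl⟩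
  -- (b) there is an extreme point whose value is at most `f X`
  obtain ⟨x₀, hx₀, hx₀P⟩ := exists_good_extreme F hacc hchain f hqc hX hXne
  have hx₀X : x₀ ∈ X := Finset.mem_of_mem_filter _ hx₀
  have hle : piF (Fplus F) f x₀ X ≤ f X := by
    rw [hpi_eq x₀ hx₀X]
    refine csSup_le ⟨f X, X, ⟨hXF, hx₀X, le_refl _⟩, rfl⟩ ?_
    rintro b ⟨A, ⟨⟨hAF, hAne⟩, hxA, hAX⟩, rfl⟩
    exact hx₀P A hAF hAne hxA hAX
  -- compute the infimum
  have hIfin : ((fun x => piF (Fplus F) f x X) '' ↑(exF F X)).Finite :=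
    (exF F X).finite_toSet.image _
  have hmem : piF (Fplus F) f x₀ X ∈ (fun x => piF (Fplus F) f x X) '' ↑(exF F X) :=
    ⟨x₀, by simpa using hx₀, rfl⟩
  refine le_antisymm ?_ ?_
  · exact le_trans (csInf_le hIfin.bddBelow hmem) hle
  · refine le_csInf ⟨_, hmem⟩ ?_
    rintro b ⟨x, hx, rfl⟩
    exact hge x (by simpa using hx)
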